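/- arXiv:1707.05807 — 5 statements merged into one kernel-verified Lean document; each statement's English description precedes it below -/
import Mathlib

section
/- Fix w, w' > 0 and real numbers 0 ≤ r ≤ s. For any z ∈ [r, s], |1/(1+z·w) - 1/(1+z·w')| ≤ |w - w'|·z* / ((1 + z*·w)(1 + z*·w')), where z* = max(r, min(s, 1/√(w·w'))). -/
theorem stmt_5 (w w' r s : ℝ) (hw : 0 < w) (hw' : 0 < w') (hr : 0 ≤ r) (hrs : r ≤ s)
    (z : ℝ) (hz : z ∈ Set.Icc r s) :
    |1 / (1 + z * w) - 1 / (1 + z * w')| ≤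
      |w - w'| * (max r (min s (1 / Real.sqrt (w * w')))) /
        ((1 + (max r (min s (1 / Real.sqrt (w * w')))) * w) *
          (1 + (max r (min s (1 / Real.sqrt (w * w')))) * w')) := by
  obtain ⟨hrz, hzs⟩ := hz
  set t : ℝ := 1 / Real.sqrt (w * w') with ht
  have hww : 0 < w * w' := mul_pos hw hw'
  have hst : 0 < Real.sqrt (w * w') := Real.sqrt_pos.2 hww
  have ht0 : 0 < t := by positivity
  have ht2 : t ^ 2 * (w * w') = 1 := by
    rw [ht, div_pow, one_pow, Real.sq_sqrt hww.le]
    field_simp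
  set A : ℝ := max r (min s t) with hAdef
  have hz0 : 0 ≤ z := hr.trans hrz
  have hA0 : 0 ≤ A := hr.trans (le_max_left _ _)
  have p1 : 0 < 1 + z * w := by positivity
  have p2 : 0 < 1 + z * w' := by positivity
  have q1 : 0 < 1 + A * w := by positivity
  have q2 : 0 < 1 + A * w' := by positivity
  -- key inequality
  have key : (z - A) * (1 - w * w' * (z * A)) ≤ 0 := by
    rcases le_or_gt z A with h | h
    · rcases eq_or_lt_of_le h with h' | h'
      · simp [h']
      · -- z < A, so A > r hence A = min s t ≤ t
        have hAt : A ≤ t := by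
          have : A = min s t := by
            rcases max_cases r (min s t) with ⟨h1, h2⟩ | ⟨h1, h2⟩
            · exfalso
              have hAr : A = r := by rw [hAdef, h1]
              rw [hAr] at h'; exact absurd hrz (not_le.2 h')
            · exact h1
          rw [this]; exact min_le_right _ _
        have hzA : z * A ≤ t ^ 2 := by nlinarith
        have : 0 ≤ 1 - w * w' * (z * A) := by nlinarith
        nlinarith
    · -- A < z ≤ s, so min s t = t and A ≥ t
      have hts : t < s := by
        by_contra hc
        push_neg at hc
        have : min s t = s := min_eq_left hc
        have : s ≤ A := by rw [hAdef, this]; exact le_max_right _ _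
        linarith [hzs]
      have htA : t ≤ A := by
        have : min s t = t := min_eq_right hts.le
        rw [hAdef, this]; exact le_max_right _ _
      have hzA : t ^ 2 ≤ z * A := by nlinarith
      have : 1 - w * w' * (z * A) ≤ 0 := by nlinarith
      nlinarith
  have main : z * ((1 + A * w) * (1 + A * w')) ≤ A * ((1 + z * w) * (1 + z * w')) := by
    nlinarith [key]
  have heq : 1 / (1 + z * w) - 1 / (1 + z * w') = (w' - w) * z / ((1 + z * w) * (1 + z * w')) := by
    field_simp
    ring
  rw [heq, abs_div, abs_mul, abs_of_nonneg hz0, abs_of_pos (mul_pos p1 p2), abs_sub_comm]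
  rw [div_le_div_iff₀ (mul_pos p1 p2) (mul_pos q1 q2)]
  have habs : 0 ≤ |w - w'| := abs_nonneg _
  calc |w - w'| * z * ((1 + A * w) * (1 + A * w'))
      = |w - w'| * (z * ((1 + A * w) * (1 + A * w'))) := by ring
    _ ≤ |w - w'| * (A * ((1 + z * w) * (1 + z * w'))) := by
        exact mul_le_mul_of_nonneg_left main habs
    _ = |w - w'| * A * ((1 + z * w) * (1 + z * w')) := by ring
end

section
/- Let C be a p×p nonnegative real matrix with spectral norm ‖C‖ < 1, and for a probability vector q ∈ ℝ^p define B(q) = I - diag(q)(I - C). If q_t = e_{(t mod p)+1} is the systematic scan, then for any nonnegative vector d ∈ ℝ^p, the quantity dᵀ B(q_T)···B(q_1) 1 converges to 0 as T → ∞. -/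
open Matrix
open scoped Matrix.Norms.L2Operator

theorem stmt_6 {p : ℕ} (hp : 0 < p)
    (C : Matrix (Fin p) (Fin p) ℝ) (hC : ∀ i j, 0 ≤ C i j)
    (hnorm : ‖C‖ < 1)
    (d : Fin p → ℝ) (hd : ∀ i, 0 ≤ d i)
    (v : ℕ → Fin p → ℝ) (hv0 : v 0 = 1)
    (hv : ∀ t : ℕ,
      v (t + 1) =
        (1 - Matrix.diagonal (Pi.single (⟨t % p, Nat.mod_lt t hp⟩ : Fin p) 1) *
            (1 - C)).mulVec (v t)) :
    Filter.Tendsto (fun T => d ⬝ᵥ v T) Filter.atTop (nhds 0) := by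
  -- geometric series
  have hMsum : Summable (fun n => C ^ n) := summable_geometric_of_norm_lt_one hnorm
  set M : Matrix (Fin p) (Fin p) ℝ := ∑' n : ℕ, C ^ n with hMdef
  have hshift : C * M = M - 1 := by
    rw [hMdef, geom_series_mul_shift C hnorm, geom_series_succ C hnorm]
  -- entry evaluation
  have hpow : ∀ (n : ℕ) i j, 0 ≤ (C ^ n) i j := by
    intro n
    induction n with
    | zero => intro i j; by_cases h : i = j <;> simp [pow_zero, Matrix.one_apply, h]
    | succ n ih =>
      intro i j
      rw [pow_succ, Matrix.mul_apply]
      exact Finset.sum_nonneg fun k _ => mul_nonneg (ih i k) (hC k j)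
  have hentry : ∀ i j, M i j = ∑' n : ℕ, (C ^ n) i j := by
    intro i j
    let ev : Matrix (Fin p) (Fin p) ℝ →ₗ[ℝ] ℝ :=
      { toFun := fun A => A i j, map_add' := fun _ _ => rfl, map_smul' := fun _ _ => rfl }
    have := (ev.toContinuousLinearMap).map_tsum hMsum
    exact this
  have hentrysum : ∀ i j, Summable (fun n => (C ^ n) i j) := by
    intro i j
    let ev : Matrix (Fin p) (Fin p) ℝ →ₗ[ℝ] ℝ :=
      { toFun := fun A => A i j, map_add' := fun _ _ => rfl, map_smul' := fun _ _ => rfl }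
    exact hMsum.map ev.toContinuousLinearMap.toLinearMap.toAddMonoidHom
      ev.toContinuousLinearMap.continuous
  have hM0 : ∀ i j, 0 ≤ M i j := fun i j => by
    rw [hentry i j]; exact tsum_nonneg fun n => hpow n i j
  have hMdiag : ∀ i, 1 ≤ M i i := by
    intro i
    have h0 : (C ^ 0) i i = 1 := by simp [Matrix.one_apply]
    calc (1 : ℝ) = (C ^ 0) i i := h0.symm
      _ ≤ ∑' n, (C ^ n) i i := Summable.le_tsum (hentrysum i i) 0 fun n _ => hpow n i i
      _ = M i i := (hentry i i).symm
  -- the vector u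
  set u : Fin p → ℝ := M *ᵥ (fun _ => 1) with hudef
  have hu1 : ∀ i, 1 ≤ u i := by
    intro i
    have : u i = ∑ j, M i j := by simp [hudef, Matrix.mulVec, dotProduct]
    rw [this]
    calc (1 : ℝ) ≤ M i i := hMdiag i
      _ ≤ ∑ j, M i j := Finset.single_le_sum (fun j _ => hM0 i j) (Finset.mem_univ i)
  have hCu : ∀ i, (C *ᵥ u) i = u i - 1 := by
    intro i
    have : C *ᵥ u = (M - 1) *ᵥ (fun _ => 1) := by
      rw [hudef, Matrix.mulVec_mulVec, hshift]
    rw [this, Matrix.sub_mulVec, Matrix.one_mulVec]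
    simp [hudef]
  -- K and θ
  haveI : Nonempty (Fin p) := ⟨⟨0, hp⟩⟩
  set K : ℝ := Finset.univ.sup' (Finset.univ_nonempty) u with hKdef
  have huK : ∀ i, u i ≤ K := fun i => Finset.le_sup' u (Finset.mem_univ i)
  have hK1 : (1 : ℝ) ≤ K := le_trans (hu1 ⟨0, hp⟩) (huK ⟨0, hp⟩)
  have hK0 : (0 : ℝ) < K := lt_of_lt_of_le one_pos hK1
  set θ : ℝ := 1 - 1 / K with hθdef
  have hθ0 : 0 ≤ θ := by
    rw [hθdef]; simp only [sub_nonneg]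
    exact (div_le_one hK0).2 hK1
  have hθ1 : θ < 1 := by
    rw [hθdef]; simp only [sub_lt_self_iff]
    exact div_pos one_pos hK0
  have hCuθ : ∀ i, (C *ᵥ u) i ≤ θ * u i := by
    intro i
    rw [hCu i, hθdef, sub_mul, one_mul]
    have h1 : u i / K ≤ 1 := (div_le_one hK0).2 (huK i)
    have h2 : 1 / K * u i = u i / K := by ring
    rw [h2]
    linarith [hu1 i]
  have hu0 : ∀ i, 0 ≤ u i := fun i => le_trans zero_le_one (hu1 i)
  -- the step structure
  have hstep : ∀ (t : ℕ) (i : Fin p),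
      v (t + 1) i = if (i : ℕ) = t % p then (C *ᵥ v t) i else v t i := by
    intro t i
    rw [hv t]
    set q : Fin p := ⟨t % p, Nat.mod_lt t hp⟩ with hq
    rw [Matrix.sub_mulVec, Matrix.one_mulVec, ← Matrix.mulVec_mulVec, Matrix.sub_mulVec,
      Matrix.one_mulVec, Pi.sub_apply, Matrix.mulVec_diagonal]
    by_cases h : i = q
    · subst h
      simp [Pi.single_eq_same, hq]
    · have : (i : ℕ) ≠ t % p := by
        intro hc; exact h (Fin.ext hc)
      rw [Pi.single_eq_of_ne h, if_neg this]
      ring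
  -- mulVec monotonicity
  have hmono : ∀ (w w' : Fin p → ℝ), (∀ j, w j ≤ w' j) → ∀ i, (C *ᵥ w) i ≤ (C *ᵥ w') i := by
    intro w w' hw i
    simp only [Matrix.mulVec, dotProduct]
    exact Finset.sum_le_sum fun j _ => mul_le_mul_of_nonneg_left (hw j) (hC i j)
  have hCsmul : ∀ (c : ℝ) (i : Fin p), (C *ᵥ fun j => c * u j) i = c * (C *ᵥ u) i := by
    intro c i
    simp only [Matrix.mulVec, dotProduct, Finset.mul_sum]
    exact Finset.sum_congr rfl fun j _ => by ring
  -- main induction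
  have main : ∀ k : ℕ, ∀ s : ℕ, s ≤ p →
      (∀ i : Fin p, v (k * p + s) i ≤ θ ^ k * u i) ∧
      (∀ i : Fin p, (i : ℕ) < s → v (k * p + s) i ≤ θ ^ (k + 1) * u i) := by
    intro k
    induction k with
    | zero =>
      have base : ∀ i : Fin p, v 0 i ≤ θ ^ 0 * u i := by
        intro i; rw [hv0, pow_zero, one_mul]; exact hu1 i
      intro s
      induction s with
      | zero =>
        intro _
        constructor
        · simpa using base
        · intro i hi; exact absurd hi (Nat.not_lt_zero _)
      | succ s ihs =>
        intro hs
        have hsp : s < p := hs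
        obtain ⟨ha, hb⟩ := ihs (le_of_lt hsp)
        have hmod : (0 * p + s) % p = s := by simp [Nat.mod_eq_of_lt hsp]
        constructor
        · intro i
          rw [show 0 * p + (s + 1) = (0 * p + s) + 1 by ring, hstep (0 * p + s) i, hmod]
          by_cases h : (i : ℕ) = s
          · rw [if_pos h]
            calc (C *ᵥ v (0 * p + s)) i ≤ (C *ᵥ fun j => θ ^ 0 * u j) i := hmono _ _ ha i
              _ = θ ^ 0 * (C *ᵥ u) i := hCsmul _ i
              _ ≤ θ ^ 0 * (θ * u i) := by
                  exact mul_le_mul_of_nonneg_left (hCuθ i) (pow_nonneg hθ0 _)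
              _ ≤ θ ^ 0 * u i := by
                  have : θ * u i ≤ 1 * u i :=
                    mul_le_mul_of_nonneg_right (le_of_lt hθ1) (hu0 i)
                  nlinarith [pow_nonneg hθ0 0]
          · rw [if_neg h]; exact ha i
        · intro i hi
          rw [show 0 * p + (s + 1) = (0 * p + s) + 1 by ring, hstep (0 * p + s) i, hmod]
          by_cases h : (i : ℕ) = s
          · rw [if_pos h]
            calc (C *ᵥ v (0 * p + s)) i ≤ (C *ᵥ fun j => θ ^ 0 * u j) i := hmono _ _ ha i
              _ = θ ^ 0 * (C *ᵥ u) i := hCsmul _ i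
              _ ≤ θ ^ 0 * (θ * u i) :=
                  mul_le_mul_of_nonneg_left (hCuθ i) (pow_nonneg hθ0 _)
              _ = θ ^ (0 + 1) * u i := by ring
          · rw [if_neg h]
            exact hb i (lt_of_le_of_ne (Nat.lt_succ_iff.1 hi) h)
    | succ k ihk =>
      have base : ∀ i : Fin p, v ((k + 1) * p) i ≤ θ ^ (k + 1) * u i := by
        intro i
        have := (ihk p le_rfl).2 i i.2
        rwa [show k * p + p = (k + 1) * p by ring] at this
      intro s
      induction s with
      | zero =>
        intro _
        constructor
        · simpa using base
        · intro i hi; exact absurd hi (Nat.not_lt_zero _)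
      | succ s ihs =>
        intro hs
        have hsp : s < p := hs
        obtain ⟨ha, hb⟩ := ihs (le_of_lt hsp)
        have hmod : ((k + 1) * p + s) % p = s := by
          rw [Nat.add_comm, Nat.add_mul_mod_self_right, Nat.mod_eq_of_lt hsp]
        constructor
        · intro i
          rw [show (k + 1) * p + (s + 1) = ((k + 1) * p + s) + 1 by ring,
            hstep ((k + 1) * p + s) i, hmod]
          by_cases h : (i : ℕ) = s
          · rw [if_pos h]
            calc (C *ᵥ v ((k + 1) * p + s)) i
                ≤ (C *ᵥ fun j => θ ^ (k + 1) * u j) i := hmono _ _ ha i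
              _ = θ ^ (k + 1) * (C *ᵥ u) i := hCsmul _ i
              _ ≤ θ ^ (k + 1) * (θ * u i) :=
                  mul_le_mul_of_nonneg_left (hCuθ i) (pow_nonneg hθ0 _)
              _ ≤ θ ^ (k + 1) * u i := by
                  have h1 : θ * u i ≤ 1 * u i :=
                    mul_le_mul_of_nonneg_right (le_of_lt hθ1) (hu0 i)
                  nlinarith [pow_nonneg hθ0 (k + 1)]
          · rw [if_neg h]; exact ha i
        · intro i hi
          rw [show (k + 1) * p + (s + 1) = ((k + 1) * p + s) + 1 by ring,
            hstep ((k + 1) * p + s) i, hmod]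
          by_cases h : (i : ℕ) = s
          · rw [if_pos h]
            calc (C *ᵥ v ((k + 1) * p + s)) i
                ≤ (C *ᵥ fun j => θ ^ (k + 1) * u j) i := hmono _ _ ha i
              _ = θ ^ (k + 1) * (C *ᵥ u) i := hCsmul _ i
              _ ≤ θ ^ (k + 1) * (θ * u i) :=
                  mul_le_mul_of_nonneg_left (hCuθ i) (pow_nonneg hθ0 _)
              _ = θ ^ (k + 1 + 1) * u i := by ring
          · rw [if_neg h]
            exact hb i (lt_of_le_of_ne (Nat.lt_succ_iff.1 hi) h)
  -- bound at any time T
  have hbound : ∀ T : ℕ, ∀ i : Fin p, v T i ≤ θ ^ (T / p) * u i := by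
    intro T i
    have := (main (T / p) (T % p) (le_of_lt (Nat.mod_lt T hp))).1 i
    rwa [show T / p * p + T % p = T from by rw [Nat.mul_comm]; exact Nat.div_add_mod T p] at this
  -- nonnegativity of v
  have hvpos : ∀ T : ℕ, ∀ i : Fin p, 0 ≤ v T i := by
    intro T
    induction T with
    | zero => intro i; rw [hv0]; exact zero_le_one
    | succ T ih =>
      intro i
      rw [hstep T i]
      by_cases h : (i : ℕ) = T % p
      · rw [if_pos h]
        simp only [Matrix.mulVec, dotProduct]
        exact Finset.sum_nonneg fun j _ => mul_nonneg (hC i j) (ih j)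
      · rw [if_neg h]; exact ih i
  -- squeeze
  have hfg : ∀ T : ℕ, d ⬝ᵥ v T ≤ θ ^ (T / p) * (d ⬝ᵥ u) := by
    intro T
    simp only [dotProduct, Finset.mul_sum]
    refine Finset.sum_le_sum fun i _ => ?_
    calc d i * v T i ≤ d i * (θ ^ (T / p) * u i) :=
        mul_le_mul_of_nonneg_left (hbound T i) (hd i)
      _ = θ ^ (T / p) * (d i * u i) := by ring
  have hf0 : ∀ T : ℕ, 0 ≤ d ⬝ᵥ v T := by
    intro T
    exact Finset.sum_nonneg fun i _ => mul_nonneg (hd i) (hvpos T i)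
  have hdiv : Filter.Tendsto (fun T : ℕ => T / p) Filter.atTop Filter.atTop :=
    (Filter.map_div_atTop_eq_nat p hp).le
  have hg : Filter.Tendsto (fun T : ℕ => θ ^ (T / p) * (d ⬝ᵥ u)) Filter.atTop (nhds 0) := by
    have h1 : Filter.Tendsto (fun n : ℕ => θ ^ n) Filter.atTop (nhds 0) :=
      tendsto_pow_atTop_nhds_zero_of_lt_one hθ0 hθ1
    have := (h1.comp hdiv).mul_const (d ⬝ᵥ u)
    simpa using this
  exact squeeze_zero hf0 hfg hg
end

section
/- Let (p_t)_{t=0}^T be vectors in ℝ^p satisfying p_0 ≤ 1 entrywise, and suppose for each t there is an index i_t such that p_{t, i_t} ≤ Σ_{j ≠ i_t} C_{i_t j} · p_{t-1, j} and p_{t,i} ≤ p_{t-1,i} for i ≠ i_t, where C is entrywise nonnegative with zero diagonal. Then for any nonnegative d ∈ ℝ^p, dᵀ p_T ≤ dᵀ B(e_{i_T})···B(e_{i_1}) 1, where B(q) = I - diag(q)(I - C). -/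
open Matrix

theorem stmt_9 {p : ℕ}
    (C : Matrix (Fin p) (Fin p) ℝ) (hC : ∀ i j, 0 ≤ C i j) (hdiag : ∀ i, C i i = 0)
    (T : ℕ) (P : ℕ → Fin p → ℝ) (idx : ℕ → Fin p)
    (h0 : ∀ i, P 0 i ≤ 1)
    (hrec1 : ∀ t, 1 ≤ t → t ≤ T →
      P t (idx t) ≤ ∑ j ∈ Finset.univ.filter (· ≠ idx t), C (idx t) j * P (t - 1) j)
    (hrec2 : ∀ t, 1 ≤ t → t ≤ T → ∀ i, i ≠ idx t → P t i ≤ P (t - 1) i)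
    (d : Fin p → ℝ) (hd : ∀ i, 0 ≤ d i)
    (b : ℕ → Fin p → ℝ) (hb0 : b 0 = 1)
    (hb : ∀ t : ℕ,
      b (t + 1) =
        (1 - Matrix.diagonal (Pi.single (idx (t + 1)) 1) * (1 - C)).mulVec (b t)) :
    d ⬝ᵥ P T ≤ d ⬝ᵥ b T := by
  have hbstep : ∀ t i, b (t + 1) i =
      if i = idx (t + 1) then ∑ k, C i k * b t k else b t i := by
    intro t i
    rw [hb t]
    by_cases h : i = idx (t + 1)
    · have he : ∀ j, (1 - Matrix.diagonal (Pi.single (idx (t+1)) (1:ℝ)) * (1 - C)) i j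
          = C i j := by
        intro j
        simp [Matrix.sub_apply, Matrix.diagonal_mul, h, Matrix.one_apply]
      simp [Matrix.mulVec, dotProduct, he, h]
    · have he : ∀ j, (1 - Matrix.diagonal (Pi.single (idx (t+1)) (1:ℝ)) * (1 - C)) i j
          = (1 : Matrix (Fin p) (Fin p) ℝ) i j := by
        intro j
        simp [Matrix.sub_apply, Matrix.diagonal_mul, Pi.single_eq_of_ne h]
      simp [Matrix.mulVec, dotProduct, he, h, Matrix.one_apply]
  have key : ∀ t, t ≤ T → ∀ i, P t i ≤ b t i := by
    intro t
    induction t with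
    | zero => intro _ i; rw [hb0]; exact h0 i
    | succ n ih =>
      intro hle i
      have ihn := ih (Nat.le_of_succ_le hle)
      rw [hbstep n i]
      by_cases h : i = idx (n + 1)
      · rw [if_pos h, h]
        calc P (n+1) (idx (n+1))
            ≤ ∑ j ∈ Finset.univ.filter (· ≠ idx (n+1)), C (idx (n+1)) j * P n j := by
              simpa using hrec1 (n+1) (Nat.le_add_left 1 n) hle
          _ ≤ ∑ j ∈ Finset.univ.filter (· ≠ idx (n+1)), C (idx (n+1)) j * b n j :=
              Finset.sum_le_sum (fun j _ =>
                mul_le_mul_of_nonneg_left (ihn j) (hC (idx (n+1)) j))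
          _ = ∑ k, C (idx (n+1)) k * b n k := by
              rw [Finset.sum_filter_of_ne]
              intro j _ hj hji
              exact hj (by rw [hji, hdiag, zero_mul])
      · rw [if_neg h]
        exact le_trans (by simpa using hrec2 (n+1) (Nat.le_add_left 1 n) hle i h) (ihn i)
  exact Finset.sum_le_sum fun i _ => mul_le_mul_of_nonneg_left (key T le_rfl i) (hd i)
end

section
/- Consider the Ising-type conditional probability π_i(x) = 1/(1 + exp(-2 Σ_{k≠i} θ_{ik} x_k - 2θ_i)) for x ∈ {-1,1}^p. For any two configurations x, y differing only in coordinate j (j ≠ i), |π_i(x) - π_i(y)| ≤ (e^{2|θ_{ij}|} - e^{-2|θ_{ij}|})·b* / ((1 + b*·e^{2θ_{ij}})(1 + b*·e^{-2θ_{ij}})) where b* = max(e^{-2Σ_{k≠j,k≠i}|θ_{ik}| - 2θ_i}, min(e^{2Σ_{k≠j,k≠i}|θ_{ik}| - 2θ_i}, 1)). -/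
private lemma clamp_key (lo hi b : ℝ) (hlo : 0 < lo) (h1 : lo ≤ b) (h2 : b ≤ hi) :
    (b - max lo (min hi 1)) * (1 - b * max lo (min hi 1)) ≤ 0 := by
  set c := max lo (min hi 1) with hc
  have hc0 : 0 < c := lt_max_of_lt_left hlo
  have hb0 : 0 < b := hlo.trans_le h1
  rcases le_total b 1 with hb | hb
  · have hbc : b ≤ c := le_max_of_le_right (le_min h2 hb)
    have hc1 : c ≤ 1 := max_le (h1.trans hb) (min_le_right _ _)
    have hbc1 : b * c ≤ 1 := by
      calc b * c ≤ 1 * 1 := mul_le_mul hb hc1 hc0.le (by norm_num)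
        _ = 1 := by ring
    exact mul_nonpos_of_nonpos_of_nonneg (by linarith) (by linarith)
  · have hcb : c ≤ b := max_le h1 (le_trans (min_le_right _ _) hb)
    have hc1 : 1 ≤ c := le_max_of_le_right (le_min (hb.trans h2) le_rfl)
    have hbc1 : 1 ≤ b * c := by
      calc (1:ℝ) = 1 * 1 := by ring
        _ ≤ b * c := mul_le_mul hb hc1 (by norm_num) hb0.le
    exact mul_nonpos_of_nonneg_of_nonpos (by linarith) (by linarith)

private lemma exp_abs_sub (u : ℝ) :
    |Real.exp u - Real.exp (-u)| = Real.exp |u| - Real.exp (-|u|) := by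
  rcases abs_cases u with ⟨h, hu⟩ | ⟨h, hu⟩
  · rw [h]
    exact abs_of_nonneg (sub_nonneg.mpr (Real.exp_le_exp.mpr (by linarith)))
  · rw [h, neg_neg,
      abs_of_nonpos (sub_nonpos.mpr (Real.exp_le_exp.mpr (by linarith : u ≤ -u)))]
    try ring

private lemma core_ineq (t b B : ℝ) (hb : 0 < b) (hB : 0 < B)
    (key : (b - B) * (1 - b * B) ≤ 0) :
    |1 / (1 + b * Real.exp (-(2 * t))) - 1 / (1 + b * Real.exp (2 * t))| ≤
      (Real.exp (2 * |t|) - Real.exp (-(2 * |t|))) * B /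
        ((1 + B * Real.exp (2 * t)) * (1 + B * Real.exp (-(2 * t)))) := by
  set e := Real.exp (2 * t) with he_def
  set e' := Real.exp (-(2 * t)) with he'_def
  have he : 0 < e := Real.exp_pos _
  have he' : 0 < e' := Real.exp_pos _
  have hee' : e * e' = 1 := by
    rw [he_def, he'_def, ← Real.exp_add]; simp
  have hu : 0 < 1 + b * e' := by positivity
  have hv : 0 < 1 + b * e := by positivity
  have hU : 0 < 1 + B * e := by positivity
  have hV : 0 < 1 + B * e' := by positivity
  have hsub : 1 / (1 + b * e') - 1 / (1 + b * e)
      = (b * e - b * e') / ((1 + b * e') * (1 + b * e)) := by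
    field_simp
    try ring
  have hNabs : |b * e - b * e'| = b * (Real.exp (2 * |t|) - Real.exp (-(2 * |t|))) := by
    have h2t : |(2 : ℝ) * t| = 2 * |t| := by rw [abs_mul, abs_two]
    rw [← mul_sub, abs_mul, abs_of_pos hb, he_def, he'_def, exp_abs_sub (2 * t), h2t]
  set N := Real.exp (2 * |t|) - Real.exp (-(2 * |t|)) with hN_def
  have hN0 : 0 ≤ N := by
    rw [hN_def]
    have : -(2 * |t|) ≤ 2 * |t| := by have := abs_nonneg t; linarith
    exact sub_nonneg.mpr (Real.exp_le_exp.mpr this)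
  rw [hsub, abs_div, abs_of_pos (mul_pos hu hv), hNabs]
  rw [div_le_div_iff₀ (mul_pos hu hv) (mul_pos hU hV)]
  -- goal: b * N * ((1+B*e)*(1+B*e')) ≤ N * B * ((1+b*e')*(1+b*e))
  have h0 : (e * e' - 1) * (b * B * B - b * b * B) = 0 := by
    rw [hee']; ring
  have hexpand : b * ((1 + B * e) * (1 + B * e')) - B * ((1 + b * e') * (1 + b * e))
      = (b - B) * (1 - b * B) + (e * e' - 1) * (b * B * B - b * b * B) := by ring
  have hbd : b * ((1 + B * e) * (1 + B * e')) ≤ B * ((1 + b * e') * (1 + b * e)) := by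
    linarith
  nlinarith [mul_le_mul_of_nonneg_left hbd hN0]

private lemma aux_main {p : ℕ}
    (θ : Fin p → Fin p → ℝ) (θ0 : Fin p → ℝ) (i j : Fin p) (hij : i ≠ j)
    (x y : Fin p → ℝ) (hx : ∀ k, x k = -1 ∨ x k = 1)
    (hdiff : ∀ k, k ≠ j → x k = y k)
    (hxj : x j = 1) (hyj : y j = -1)
    (bstar : ℝ)
    (hbstar : bstar =
      max (Real.exp (-(2 * ∑ k ∈ Finset.univ.filter (fun k => k ≠ j ∧ k ≠ i), |θ i k|)
            - 2 * θ0 i))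
        (min (Real.exp (2 * ∑ k ∈ Finset.univ.filter (fun k => k ≠ j ∧ k ≠ i), |θ i k|
            - 2 * θ0 i)) 1)) :
    |1 / (1 + Real.exp (-(2 * ∑ k ∈ Finset.univ.filter (· ≠ i), θ i k * x k) - 2 * θ0 i))
      - 1 / (1 + Real.exp (-(2 * ∑ k ∈ Finset.univ.filter (· ≠ i), θ i k * y k) - 2 * θ0 i))| ≤
      (Real.exp (2 * |θ i j|) - Real.exp (-(2 * |θ i j|))) * bstar /
        ((1 + bstar * Real.exp (2 * θ i j)) * (1 + bstar * Real.exp (-(2 * θ i j)))) := by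
  classical
  set S := Finset.univ.filter (fun k : Fin p => k ≠ j ∧ k ≠ i) with hS
  have hjS : j ∉ S := by simp [hS]
  have hfil : Finset.univ.filter (· ≠ i) = insert j S := by
    ext k
    simp only [hS, Finset.mem_filter, Finset.mem_insert, Finset.mem_univ, true_and]
    constructor
    · intro h
      by_cases hkj : k = j
      · exact Or.inl hkj
      · exact Or.inr ⟨hkj, h⟩
    · rintro (rfl | ⟨_, h⟩)
      · exact hij.symm
      · exact h
  have hsplit : ∀ z : Fin p → ℝ,
      ∑ k ∈ Finset.univ.filter (· ≠ i), θ i k * z k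
        = θ i j * z j + ∑ k ∈ S, θ i k * z k := fun z => by
    rw [hfil, Finset.sum_insert hjS]
  set t := θ i j with ht
  set S1 := ∑ k ∈ S, θ i k * x k with hS1
  have hsumy : ∑ k ∈ S, θ i k * y k = S1 := by
    apply Finset.sum_congr rfl
    intro k hk
    have hkj : k ≠ j := by
      rw [hS] at hk; exact (Finset.mem_filter.mp hk).2.1
    rw [hdiff k hkj]
  set M := 2 * ∑ k ∈ S, |θ i k| with hM
  set c := 2 * θ0 i with hc
  set b := Real.exp (-(2 * S1) - c) with hb_def
  have hb : 0 < b := Real.exp_pos _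
  -- |2S1| ≤ M
  have hAM : |2 * S1| ≤ M := by
    rw [abs_mul, abs_two, hM]
    have : |S1| ≤ ∑ k ∈ S, |θ i k| := by
      refine (Finset.abs_sum_le_sum_abs _ _).trans (Finset.sum_le_sum fun k _ => ?_)
      rw [abs_mul]
      rcases hx k with h | h <;> simp [h]
    linarith
  obtain ⟨hAM1, hAM2⟩ := abs_le.mp hAM
  have hlo : Real.exp (-M - c) ≤ b := Real.exp_le_exp.mpr (by linarith)
  have hhi : b ≤ Real.exp (M - c) := Real.exp_le_exp.mpr (by linarith)
  have hbstar' : bstar = max (Real.exp (-M - c)) (min (Real.exp (M - c)) 1) := by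
    exact hbstar
  have hB : 0 < bstar := by
    rw [hbstar']; exact lt_max_of_lt_left (Real.exp_pos _)
  have key : (b - bstar) * (1 - b * bstar) ≤ 0 := by
    rw [hbstar']
    exact clamp_key _ _ _ (Real.exp_pos _) hlo hhi
  have hπx : 1 / (1 + Real.exp (-(2 * ∑ k ∈ Finset.univ.filter (· ≠ i), θ i k * x k)
      - 2 * θ0 i)) = 1 / (1 + b * Real.exp (-(2 * t))) := by
    rw [hsplit x, hxj]
    congr 2
    rw [hb_def, ← Real.exp_add]
    congr 1
    rw [hc]; ring
  have hπy : 1 / (1 + Real.exp (-(2 * ∑ k ∈ Finset.univ.filter (· ≠ i), θ i k * y k)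
      - 2 * θ0 i)) = 1 / (1 + b * Real.exp (2 * t)) := by
    rw [hsplit y, hsumy, hyj]
    congr 2
    rw [hb_def, ← Real.exp_add]
    congr 1
    rw [hc]; ring
  rw [hπx, hπy]
  exact core_ineq t b bstar hb hB key

theorem stmt_11 {p : ℕ}
    (θ : Fin p → Fin p → ℝ) (θ0 : Fin p → ℝ) (i j : Fin p) (hij : i ≠ j)
    (x y : Fin p → ℝ) (hx : ∀ k, x k = -1 ∨ x k = 1) (hy : ∀ k, y k = -1 ∨ y k = 1)
    (hdiff : ∀ k, k ≠ j → x k = y k)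
    (πi : (Fin p → ℝ) → ℝ)
    (hπi : ∀ z : Fin p → ℝ,
      πi z = 1 / (1 + Real.exp (-(2 * ∑ k ∈ Finset.univ.filter (· ≠ i), θ i k * z k)
        - 2 * θ0 i)))
    (bstar : ℝ)
    (hbstar : bstar =
      max (Real.exp (-(2 * ∑ k ∈ Finset.univ.filter (fun k => k ≠ j ∧ k ≠ i), |θ i k|)
            - 2 * θ0 i))
        (min (Real.exp (2 * ∑ k ∈ Finset.univ.filter (fun k => k ≠ j ∧ k ≠ i), |θ i k|
            - 2 * θ0 i)) 1)) :
    |πi x - πi y| ≤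
      (Real.exp (2 * |θ i j|) - Real.exp (-(2 * |θ i j|))) * bstar /
        ((1 + bstar * Real.exp (2 * θ i j)) * (1 + bstar * Real.exp (-(2 * θ i j)))) := by
  have hB : 0 < bstar := by
    rw [hbstar]; exact lt_max_of_lt_left (Real.exp_pos _)
  rcases hx j with hxj | hxj <;> rcases hy j with hyj | hyj
  · -- x j = y j = -1 : difference is 0
    have hsum : ∑ k ∈ Finset.univ.filter (· ≠ i), θ i k * x k
        = ∑ k ∈ Finset.univ.filter (· ≠ i), θ i k * y k := by
      apply Finset.sum_congr rfl
      intro k _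
      by_cases hkj : k = j
      · subst hkj; rw [hxj, hyj]
      · rw [hdiff k hkj]
    have hxy : πi x = πi y := by rw [hπi, hπi, hsum]
    rw [hxy, sub_self, abs_zero]
    apply div_nonneg
    · apply mul_nonneg _ hB.le
      have : -(2 * |θ i j|) ≤ 2 * |θ i j| := by have := abs_nonneg (θ i j); linarith
      exact sub_nonneg.mpr (Real.exp_le_exp.mpr this)
    · have h1 := Real.exp_pos (2 * θ i j)
      have h2 := Real.exp_pos (-(2 * θ i j))
      have d1 : 0 < 1 + bstar * Real.exp (2 * θ i j) := by nlinarith [mul_pos hB h1]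
      have d2 : 0 < 1 + bstar * Real.exp (-(2 * θ i j)) := by nlinarith [mul_pos hB h2]
      exact (mul_pos d1 d2).le
  · -- x j = -1, y j = 1
    rw [abs_sub_comm, hπi, hπi]
    exact aux_main θ θ0 i j hij y x hy (fun k hk => (hdiff k hk).symm) hyj hxj bstar hbstar
  · -- x j = 1, y j = -1
    rw [hπi, hπi]
    exact aux_main θ θ0 i j hij x y hx hdiff hxj hyj bstar hbstar
  · -- x j = y j = 1
    have hsum : ∑ k ∈ Finset.univ.filter (· ≠ i), θ i k * x k
        = ∑ k ∈ Finset.univ.filter (· ≠ i), θ i k * y k := by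
      apply Finset.sum_congr rfl
      intro k _
      by_cases hkj : k = j
      · subst hkj; rw [hxj, hyj]
      · rw [hdiff k hkj]
    have hxy : πi x = πi y := by rw [hπi, hπi, hsum]
    rw [hxy, sub_self, abs_zero]
    apply div_nonneg
    · apply mul_nonneg _ hB.le
      have : -(2 * |θ i j|) ≤ 2 * |θ i j| := by have := abs_nonneg (θ i j); linarith
      exact sub_nonneg.mpr (Real.exp_le_exp.mpr this)
    · have h1 := Real.exp_pos (2 * θ i j)
      have h2 := Real.exp_pos (-(2 * θ i j))
      have d1 : 0 < 1 + bstar * Real.exp (2 * θ i j) := by nlinarith [mul_pos hB h1]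
      have d2 : 0 < 1 + bstar * Real.exp (-(2 * θ i j)) := by nlinarith [mul_pos hB h2]
      exact (mul_pos d1 d2).le
end

section
/- For σ(s) = 1/(1+e^{-s}) and any reals u ≤ v, sup over t ∈ ℝ of |σ(t + v) - σ(t + u)| = 2σ((v-u)/2) - 1 = |2σ((v-u)/2) - 1|, attained at t = -(u+v)/2. -/
lemma stmt_19_key (B C : ℝ) (hB : 0 < B) (hC : 0 < C) (hC1 : C ≤ 1) :
    1 / (1 + B * C ^ 2) - 1 / (1 + B) ≤ 2 / (1 + C) - 1 := by
  have h1 : 0 < 1 + B * C ^ 2 := by positivity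
  have h2 : 0 < 1 + B := by positivity
  have h3 : 0 < 1 + C := by positivity
  rw [div_sub_div _ _ h1.ne' h2.ne']
  have hR : 2 / (1 + C) - 1 = (1 - C) / (1 + C) := by field_simp; ring
  rw [hR, div_le_div_iff₀ (by positivity) h3]
  nlinarith [mul_nonneg (sub_nonneg.mpr hC1) (sq_nonneg (1 - B * C))]

theorem stmt_19 (u v : ℝ) (huv : u ≤ v) :
    IsGreatest
      (Set.range fun t : ℝ =>
        |(fun s => 1 / (1 + Real.exp (-s))) (t + v) -
          (fun s => 1 / (1 + Real.exp (-s))) (t + u)|)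
      (2 * (fun s => 1 / (1 + Real.exp (-s))) ((v - u) / 2) - 1) ∧
    |(fun s => 1 / (1 + Real.exp (-s))) (-(u + v) / 2 + v) -
        (fun s => 1 / (1 + Real.exp (-s))) (-(u + v) / 2 + u)| =
      2 * (fun s => 1 / (1 + Real.exp (-s))) ((v - u) / 2) - 1 ∧
    2 * (fun s => 1 / (1 + Real.exp (-s))) ((v - u) / 2) - 1 =
      |2 * (fun s => 1 / (1 + Real.exp (-s))) ((v - u) / 2) - 1| := by
  simp only
  set C := Real.exp (-((v - u) / 2)) with hCdef
  have hC : 0 < C := Real.exp_pos _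
  have hC1 : C ≤ 1 := by
    rw [hCdef, ← Real.exp_zero]
    exact Real.exp_le_exp.mpr (by linarith)
  have h3 : 0 < 1 + C := by positivity
  have hMval : 2 * (1 / (1 + C)) - 1 = (1 - C) / (1 + C) := by
    field_simp; ring
  have hM0 : 0 ≤ 2 * (1 / (1 + C)) - 1 := by
    rw [hMval]; exact div_nonneg (by linarith) (by linarith)
  -- value at the optimal t
  have hattain :
      |1 / (1 + Real.exp (-(-(u + v) / 2 + v))) - 1 / (1 + Real.exp (-(-(u + v) / 2 + u)))| =
        2 * (1 / (1 + C)) - 1 := by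
    have e1 : -(-(u + v) / 2 + v) = -((v - u) / 2) := by ring
    have e2 : -(-(u + v) / 2 + u) = (v - u) / 2 := by ring
    have e3 : Real.exp ((v - u) / 2) = C⁻¹ := by
      rw [hCdef, Real.exp_neg, inv_inv]
    have h4 : (0:ℝ) < 1 + C⁻¹ := by positivity
    have hval : 1 / (1 + C) - 1 / (1 + C⁻¹) = (1 - C) / (1 + C) := by
      rw [div_sub_div _ _ h3.ne' h4.ne', div_eq_div_iff (by positivity) h3.ne']
      field_simp
      ring
    rw [e1, e2, e3, ← hCdef, hval, hMval,
      abs_of_nonneg (div_nonneg (by linarith) (by linarith))]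
  -- upper bound for arbitrary t
  have hub : ∀ t : ℝ,
      |1 / (1 + Real.exp (-(t + v))) - 1 / (1 + Real.exp (-(t + u)))| ≤
        2 * (1 / (1 + C)) - 1 := by
    intro t
    set B := Real.exp (-(t + u)) with hBdef
    have hB : 0 < B := Real.exp_pos _
    have hA : Real.exp (-(t + v)) = B * C ^ 2 := by
      rw [hBdef, hCdef, sq, ← Real.exp_add, ← Real.exp_add]
      ring_nf
    have hC2 : C ^ 2 ≤ 1 := by nlinarith
    have hABle : B * C ^ 2 ≤ B := by nlinarith
    have hnn : 0 ≤ 1 / (1 + B * C ^ 2) - 1 / (1 + B) := by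
      have h1 : 0 < 1 + B * C ^ 2 := by positivity
      have h2 : 0 < 1 + B := by positivity
      have := one_div_le_one_div_of_le h1 (by linarith : 1 + B * C ^ 2 ≤ 1 + B)
      linarith
    rw [hA, abs_of_nonneg hnn]
    have := stmt_19_key B C hB hC hC1
    have h2C : 2 / (1 + C) = 2 * (1 / (1 + C)) := by ring
    linarith [h2C ▸ this]
  refine ⟨⟨⟨-(u + v) / 2, hattain⟩, ?_⟩, hattain, (abs_of_nonneg hM0).symm⟩
  rintro x ⟨t, rfl⟩
  exact hub t
end
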